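/- Let g be a random vector in R^d with E g = v and Var(g) ≤ ρ̄‖v‖² + σ̄², and let U be a uniformly random subset of τm blocks independent of g. Then E‖(1/τ)g_U‖² ≤ (1/τ − 1 + ρ̄/τ + 1)‖v‖² + σ̄²/τ; more precisely, E‖(1/τ)g_U − v‖² ≤ (1/τ − 1 + ρ̄/τ)‖v‖² + σ̄²/τ. -/

import Mathlib

open MeasureTheory Finset

/-- `x_U`: keep the coordinates of `x` lying in blocks of `U`, zero the rest. -/
noncomputable def restr {d m : ℕ} (b : Fin d → Fin m) (U : Finset (Fin m))
    (x : EuclideanSpace ℝ (Fin d)) : EuclideanSpace ℝ (Fin d) :=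
  (WithLp.equiv 2 (Fin d → ℝ)).symm (fun j => if b j ∈ U then x j else 0)

lemma norm_sq_eq' {d : ℕ} (y : EuclideanSpace ℝ (Fin d)) : ‖y‖ ^ 2 = ∑ j, (y j) ^ 2 := by
  rw [EuclideanSpace.norm_eq, Real.sq_sqrt (by positivity)]
  simp [Real.norm_eq_abs, sq_abs]

lemma card_filter_mem' {m k : ℕ} (hk : 0 < k) (i : Fin m) :
    ((Finset.powersetCard k (Finset.univ : Finset (Fin m))).filter (fun U => i ∈ U)).card
      = (m - 1).choose (k - 1) := by
  have hc := Finset.card_powersetCard (k-1) ((Finset.univ : Finset (Fin m)).erase i)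
  rw [Finset.card_erase_of_mem (Finset.mem_univ i), Finset.card_univ, Fintype.card_fin] at hc
  rw [← hc]
  refine Finset.card_bij' (fun U _ => U.erase i) (fun V _ => insert i V) ?_ ?_ ?_ ?_
  · intro U hU
    simp only [mem_filter, mem_powersetCard] at hU
    simp only [mem_powersetCard]
    exact ⟨Finset.erase_subset_erase i hU.1.1, by rw [Finset.card_erase_of_mem hU.2, hU.1.2]⟩
  · intro V hV
    simp only [mem_powersetCard] at hV
    simp only [mem_filter, mem_powersetCard]
    have hiV : i ∉ V := fun h => (Finset.notMem_erase i _) (hV.1 h)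
    refine ⟨⟨Finset.subset_univ _, ?_⟩, Finset.mem_insert_self i V⟩
    rw [Finset.card_insert_of_notMem hiV, hV.2]
    omega
  · intro U hU
    simp only [mem_filter] at hU
    exact Finset.insert_erase hU.2
  · intro V hV
    simp only [mem_powersetCard] at hV
    exact Finset.erase_insert (fun h => (Finset.notMem_erase i _) (hV.1 h))

set_option maxHeartbeats 1000000 in
theorem stmt6 {d m : ℕ} (b : Fin d → Fin m) (k : ℕ) (hk : 0 < k) (hkm : k ≤ m)
    (τ : ℝ) (hτ : τ = (k : ℝ) / m)
    {Ω : Type*} [MeasurableSpace Ω] (μ : Measure Ω) [IsProbabilityMeasure μ]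
    (g : Ω → EuclideanSpace ℝ (Fin d)) (v : EuclideanSpace ℝ (Fin d))
    (ρbar σbar2 : ℝ)
    (hint : Integrable g μ)
    (hint2 : Integrable (fun ω => ‖g ω - v‖ ^ 2) μ)
    (hmean : ∫ ω, g ω ∂μ = v)
    (hvar : ∫ ω, ‖g ω - v‖ ^ 2 ∂μ ≤ ρbar * ‖v‖ ^ 2 + σbar2) :
    (∫ ω, ((m.choose k : ℝ))⁻¹ *
        ∑ U ∈ Finset.powersetCard k (Finset.univ : Finset (Fin m)),
          ‖τ⁻¹ • restr b U (g ω) - v‖ ^ 2 ∂μ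
      ≤ (τ⁻¹ - 1 + ρbar / τ) * ‖v‖ ^ 2 + σbar2 / τ)
    ∧ (∫ ω, ((m.choose k : ℝ))⁻¹ *
        ∑ U ∈ Finset.powersetCard k (Finset.univ : Finset (Fin m)),
          ‖τ⁻¹ • restr b U (g ω)‖ ^ 2 ∂μ
      ≤ (τ⁻¹ - 1 + ρbar / τ + 1) * ‖v‖ ^ 2 + σbar2 / τ) := by
  have hm : 0 < m := lt_of_lt_of_le hk hkm
  have hm' : (0:ℝ) < m := by exact_mod_cast hm
  have hτ0 : 0 < τ := by rw [hτ]; positivity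
  have hτne : τ ≠ 0 := ne_of_gt hτ0
  set N := m.choose k with hN
  have hN0 : 0 < N := Nat.choose_pos hkm
  have hN0' : (0:ℝ) < (N:ℝ) := by exact_mod_cast hN0
  -- counting facts
  have h1 : m - 1 + 1 = m := Nat.succ_pred_eq_of_pos hm
  have h2 : k - 1 + 1 = k := Nat.succ_pred_eq_of_pos hk
  have hPascal : (m-1).choose (k-1) + (m-1).choose k = N := by
    have h3 := Nat.choose_succ_succ (m-1) (k-1)
    simp only [Nat.succ_eq_add_one] at h3
    rw [h1, h2] at h3
    rw [hN]
    omega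
  have hmA : (m:ℝ) * ((m-1).choose (k-1) : ℝ) = (N:ℝ) * k := by
    have h3 := Nat.add_one_mul_choose_eq (m-1) (k-1)
    simp only [Nat.succ_eq_add_one, h1, h2] at h3
    rw [hN]
    exact_mod_cast h3
  have hAr : ((N:ℝ))⁻¹ * ((m-1).choose (k-1) : ℝ) = τ := by
    rw [hτ]; field_simp; nlinarith [hmA]
  have hBr : ((N:ℝ))⁻¹ * ((m-1).choose k : ℝ) = 1 - τ := by
    have hsum : ((m-1).choose (k-1) : ℝ) + ((m-1).choose k : ℝ) = (N:ℝ) := by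
      exact_mod_cast congrArg (Nat.cast : ℕ → ℝ) hPascal
    have : ((m-1).choose k : ℝ) = (N:ℝ) - ((m-1).choose (k-1) : ℝ) := by linarith
    rw [this, mul_sub, inv_mul_cancel₀ (ne_of_gt hN0'), hAr]
  -- sum over U of an indicator-constant function
  have hsum_ite : ∀ (i : Fin m) (c c' : ℝ),
      ∑ U ∈ Finset.powersetCard k (Finset.univ : Finset (Fin m)),
        (if i ∈ U then c else c')
      = ((m-1).choose (k-1) : ℝ) * c + ((m-1).choose k : ℝ) * c' := by
    intro i c c'
    rw [Finset.sum_ite, Finset.sum_const, Finset.sum_const, card_filter_mem' hk i]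
    have hcard2 : ((Finset.powersetCard k (Finset.univ : Finset (Fin m))).filter
        (fun U => ¬ i ∈ U)).card = (m-1).choose k := by
      have h4 := Finset.card_filter_add_card_filter_not
        (s := Finset.powersetCard k (Finset.univ : Finset (Fin m)))
        (p := fun U => i ∈ U)
      rw [card_filter_mem' hk i, Finset.card_powersetCard, Finset.card_univ,
        Fintype.card_fin] at h4
      omega
    rw [hcard2, nsmul_eq_mul, nsmul_eq_mul]
  -- pointwise identities
  have key1 : ∀ x : EuclideanSpace ℝ (Fin d),
      ((N:ℝ))⁻¹ * ∑ U ∈ Finset.powersetCard k (Finset.univ : Finset (Fin m)),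
        ‖τ⁻¹ • restr b U x - v‖ ^ 2
      = τ⁻¹ * ‖x‖ ^ 2 - 2 * (∑ j, x j * v j) + ‖v‖ ^ 2 := by
    intro x
    have hterm : ∀ U : Finset (Fin m), ‖τ⁻¹ • restr b U x - v‖ ^ 2
        = ∑ j, (if b j ∈ U then (τ⁻¹ * x j - v j) ^ 2 else (v j) ^ 2) := by
      intro U
      rw [norm_sq_eq']
      refine Finset.sum_congr rfl fun j _ => ?_
      simp only [restr, PiLp.sub_apply, PiLp.smul_apply, WithLp.equiv_symm_apply, PiLp.toLp_apply,
        smul_eq_mul]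
      split <;> ring
    simp_rw [hterm]
    rw [Finset.sum_comm]
    rw [Finset.mul_sum]
    have hj : ∀ j : Fin d, ((N:ℝ))⁻¹ *
        (∑ U ∈ Finset.powersetCard k (Finset.univ : Finset (Fin m)),
          (if b j ∈ U then (τ⁻¹ * x j - v j) ^ 2 else (v j) ^ 2))
        = τ⁻¹ * (x j) ^ 2 - 2 * (x j * v j) + (v j) ^ 2 := by
      intro j
      rw [hsum_ite, mul_add, ← mul_assoc, ← mul_assoc, hAr, hBr]
      field_simp
      ring
    rw [Finset.sum_congr rfl fun j _ => hj j]
    rw [Finset.sum_add_distrib, Finset.sum_sub_distrib, ← Finset.mul_sum, ← Finset.mul_sum,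
      norm_sq_eq' x, norm_sq_eq' v]
  have key2 : ∀ x : EuclideanSpace ℝ (Fin d),
      ((N:ℝ))⁻¹ * ∑ U ∈ Finset.powersetCard k (Finset.univ : Finset (Fin m)),
        ‖τ⁻¹ • restr b U x‖ ^ 2
      = τ⁻¹ * ‖x‖ ^ 2 := by
    intro x
    have hterm : ∀ U : Finset (Fin m), ‖τ⁻¹ • restr b U x‖ ^ 2
        = ∑ j, (if b j ∈ U then (τ⁻¹ * x j) ^ 2 else 0) := by
      intro U
      rw [norm_sq_eq']
      refine Finset.sum_congr rfl fun j _ => ?_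
      simp only [restr, PiLp.smul_apply, WithLp.equiv_symm_apply, PiLp.toLp_apply, smul_eq_mul]
      split <;> ring
    simp_rw [hterm]
    rw [Finset.sum_comm, Finset.mul_sum]
    have hj : ∀ j : Fin d, ((N:ℝ))⁻¹ *
        (∑ U ∈ Finset.powersetCard k (Finset.univ : Finset (Fin m)),
          (if b j ∈ U then (τ⁻¹ * x j) ^ 2 else 0))
        = τ⁻¹ * (x j) ^ 2 := by
      intro j
      rw [hsum_ite, mul_add, ← mul_assoc, ← mul_assoc, hAr, hBr]
      field_simp
      ring
    rw [Finset.sum_congr rfl fun j _ => hj j, ← Finset.mul_sum, norm_sq_eq' x]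
  -- inner product integrability / integrals
  have hinner_eq : ∀ x : EuclideanSpace ℝ (Fin d),
      (∑ j, x j * v j) = (inner ℝ v x : ℝ) := by
    intro x
    rw [PiLp.inner_apply]
    exact Finset.sum_congr rfl fun j _ => by simp [RCLike.inner_apply, mul_comm]
  have hinner_int : Integrable (fun ω => (inner ℝ v (g ω) : ℝ)) μ := hint.const_inner v
  have hinner_val : ∫ ω, (inner ℝ v (g ω) : ℝ) ∂μ = ‖v‖ ^ 2 := by
    rw [integral_inner hint v, hmean, real_inner_self_eq_norm_sq]
  -- integrability and value of ∫ ‖g‖²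
  have hexpand : ∀ ω, ‖g ω‖ ^ 2
      = ‖g ω - v‖ ^ 2 + (2 * (inner ℝ v (g ω) : ℝ) - ‖v‖ ^ 2) := by
    intro ω
    have : ‖g ω‖ ^ 2 = ‖(g ω - v) + v‖ ^ 2 := by rw [sub_add_cancel]
    rw [this, norm_add_sq_real, real_inner_comm v (g ω - v), inner_sub_right,
      real_inner_self_eq_norm_sq]
    ring
  have hg2int : Integrable (fun ω => ‖g ω‖ ^ 2) μ := by
    simp_rw [hexpand]
    exact hint2.add (((hinner_int.const_mul 2).sub (integrable_const _)))
  have hg2val : ∫ ω, ‖g ω‖ ^ 2 ∂μ = (∫ ω, ‖g ω - v‖ ^ 2 ∂μ) + ‖v‖ ^ 2 := by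
    have hI3 : Integrable (fun ω => 2 * (inner ℝ v (g ω) : ℝ) - ‖v‖ ^ 2) μ :=
      (hinner_int.const_mul 2).sub (integrable_const _)
    simp_rw [hexpand]
    rw [integral_add hint2 hI3,
      integral_sub (hinner_int.const_mul 2) (integrable_const (‖v‖^2)),
      integral_const_mul, hinner_val, integral_const]
    simp [measure_univ]
    ring
  set X := ∫ ω, ‖g ω - v‖ ^ 2 ∂μ with hX
  have hX0 : 0 ≤ X := integral_nonneg fun ω => by positivity
  constructor
  · -- first bound
    have heq : ∀ ω, ((m.choose k : ℝ))⁻¹ *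
        ∑ U ∈ Finset.powersetCard k (Finset.univ : Finset (Fin m)),
          ‖τ⁻¹ • restr b U (g ω) - v‖ ^ 2
        = τ⁻¹ * ‖g ω‖ ^ 2 - 2 * (inner ℝ v (g ω) : ℝ) + ‖v‖ ^ 2 := by
      intro ω; rw [key1 (g ω), hinner_eq (g ω)]
    calc ∫ ω, ((m.choose k : ℝ))⁻¹ *
        ∑ U ∈ Finset.powersetCard k (Finset.univ : Finset (Fin m)),
          ‖τ⁻¹ • restr b U (g ω) - v‖ ^ 2 ∂μ
        = ∫ ω, (τ⁻¹ * ‖g ω‖ ^ 2 - 2 * (inner ℝ v (g ω) : ℝ) + ‖v‖ ^ 2) ∂μ := by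
          exact integral_congr_ae (Filter.Eventually.of_forall heq)
      _ = τ⁻¹ * (X + ‖v‖ ^ 2) - 2 * ‖v‖ ^ 2 + ‖v‖ ^ 2 := by
          have hI4 : Integrable (fun ω => τ⁻¹ * ‖g ω‖ ^ 2 - 2 * (inner ℝ v (g ω) : ℝ)) μ :=
            (hg2int.const_mul τ⁻¹).sub (hinner_int.const_mul 2)
          rw [integral_add hI4 (integrable_const (‖v‖^2)),
            integral_sub (hg2int.const_mul τ⁻¹) (hinner_int.const_mul 2),
            integral_const_mul, integral_const_mul, hinner_val, hg2val, integral_const]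
          simp [measure_univ]
      _ ≤ (τ⁻¹ - 1 + ρbar / τ) * ‖v‖ ^ 2 + σbar2 / τ := by
          have h1 : τ⁻¹ * X ≤ τ⁻¹ * (ρbar * ‖v‖ ^ 2 + σbar2) :=
            mul_le_mul_of_nonneg_left hvar (le_of_lt (inv_pos.mpr hτ0))
          have h4 : τ⁻¹ * (ρbar * ‖v‖ ^ 2 + σbar2) = ρbar / τ * ‖v‖ ^ 2 + σbar2 / τ := by
            rw [div_eq_mul_inv, div_eq_mul_inv]; ring
          have h5 : τ⁻¹ * (X + ‖v‖ ^ 2) = τ⁻¹ * X + τ⁻¹ * ‖v‖ ^ 2 := by ring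
          rw [h5]
          rw [h4] at h1
          linarith [h1]
  · -- second bound
    have heq : ∀ ω, ((m.choose k : ℝ))⁻¹ *
        ∑ U ∈ Finset.powersetCard k (Finset.univ : Finset (Fin m)),
          ‖τ⁻¹ • restr b U (g ω)‖ ^ 2
        = τ⁻¹ * ‖g ω‖ ^ 2 := fun ω => key2 (g ω)
    calc ∫ ω, ((m.choose k : ℝ))⁻¹ *
        ∑ U ∈ Finset.powersetCard k (Finset.univ : Finset (Fin m)),
          ‖τ⁻¹ • restr b U (g ω)‖ ^ 2 ∂μ
        = τ⁻¹ * (X + ‖v‖ ^ 2) := by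
          rw [integral_congr_ae (Filter.Eventually.of_forall heq), integral_const_mul, hg2val]
      _ ≤ (τ⁻¹ - 1 + ρbar / τ + 1) * ‖v‖ ^ 2 + σbar2 / τ := by
          have h1 : τ⁻¹ * X ≤ τ⁻¹ * (ρbar * ‖v‖ ^ 2 + σbar2) :=
            mul_le_mul_of_nonneg_left hvar (le_of_lt (inv_pos.mpr hτ0))
          have h4 : τ⁻¹ * (ρbar * ‖v‖ ^ 2 + σbar2) = ρbar / τ * ‖v‖ ^ 2 + σbar2 / τ := by
            rw [div_eq_mul_inv, div_eq_mul_inv]; ring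
          have h5 : τ⁻¹ * (X + ‖v‖ ^ 2) = τ⁻¹ * X + τ⁻¹ * ‖v‖ ^ 2 := by ring
          rw [h5]
          rw [h4] at h1
          linarith [h1]
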